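/- Let g be a complex number, let λ > 0 and γ be reals with γ ≥ λ and 1 + λ·g ≠ 0, and set α = Re(λ·g). If α ≤ −1, then |(1 + γ·g)/(1 + λ·g)| ≥ γ/λ. -/

import Mathlib

/-- If `α = Re(λ·g) ≤ -1` and `γ ≥ λ > 0`, then
`|(1 + γ·g)/(1 + λ·g)| ≥ γ/λ` (the modulus is at least the steady-state
gain `γ/λ`). -/
theorem Z_gain_ge_dc_of_alpha_le_neg_one
    (g : ℂ) (lam gam : ℝ) (hlam : 0 < lam) (hgam : lam ≤ gam)
    (hne : 1 + (lam : ℂ) * g ≠ 0)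
    (hα : ((lam : ℂ) * g).re ≤ -1) :
    gam / lam ≤ ‖(1 + (gam : ℂ) * g) / (1 + (lam : ℂ) * g)‖ := by
  have hx : lam * g.re ≤ -1 := by simpa using hα
  have hA : 0 < ‖1 + (lam : ℂ) * g‖ := (norm_pos_iff.mpr hne)
  have hB : 0 ≤ ‖1 + (gam : ℂ) * g‖ := norm_nonneg _
  have hA2 : (‖1 + (lam : ℂ) * g‖)^2
      = (1 + lam * g.re)^2 + (lam * g.im)^2 := by
    rw [Complex.sq_norm, Complex.normSq_apply]
    simp
    ring
  have hB2 : (‖1 + (gam : ℂ) * g‖)^2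
      = (1 + gam * g.re)^2 + (gam * g.im)^2 := by
    rw [Complex.sq_norm, Complex.normSq_apply]
    simp
    ring
  rw [norm_div, div_le_div_iff₀ hlam hA]
  -- key: lam*(1+gam*x) ≤ gam*(1+lam*x) ≤ 0
  have h1 : gam * (1 + lam * g.re) ≤ 0 := by nlinarith
  have h2 : lam * (1 + gam * g.re) ≤ gam * (1 + lam * g.re) := by nlinarith
  have key : (gam * ‖1 + (lam : ℂ) * g‖)^2
      ≤ (‖1 + (gam : ℂ) * g‖ * lam)^2 := by
    have h4 : (gam * (1 + lam * g.re))^2 ≤ (lam * (1 + gam * g.re))^2 := by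
      nlinarith [mul_nonneg (sub_nonneg.mpr h2) (neg_nonneg.mpr (h2.trans h1))]
    have e1 : (gam * ‖1 + (lam : ℂ) * g‖)^2
        = gam^2 * ((1 + lam * g.re)^2 + (lam * g.im)^2) := by rw [mul_pow, hA2]
    have e2 : (‖1 + (gam : ℂ) * g‖ * lam)^2
        = lam^2 * ((1 + gam * g.re)^2 + (gam * g.im)^2) := by rw [mul_pow, hB2]; ring
    rw [e1, e2]; nlinarith [h4, sq_nonneg (g.im)]
  have h3 := Real.sqrt_le_sqrt key
  rwa [Real.sqrt_sq (mul_nonneg (hlam.le.trans hgam) hA.le), Real.sqrt_sq (mul_nonneg hB hlam.le)] at h3
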